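/- Let ν be a finite positive Borel measure on the closed upper half-plane, 0 < α < 2, and suppose z = x+iy with y > 0 satisfies ν(B(z,t)) ≤ λ (t/|z|)^{2−α} for all t > 0. Then ∫_0^{y/2} log(3y/t) dν_z(t) ≤ λ (y/|z|)^{2−α} (log 6 / 2^{2−α} + 1/((2−α) 2^{2−α})), where ν_z(t) = ν(B(z,t)). -/

import Mathlib

open MeasureTheory

lemma exp_integral_aux {c : ℝ} (hc : 0 < c) (a : ℝ) :
    ∫ t in Set.Ioi a, Real.exp (-c * t) = Real.exp (-c * a) / c := by
  have hderiv : ∀ x ∈ Set.Ici a,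
      HasDerivAt (fun t => -(Real.exp (-c * t) / c)) (Real.exp (-c * x)) x := by
    intro x _
    have h : HasDerivAt (fun t => -(Real.exp (-c * t) / c)) (-(Real.exp (-c * x) * (-c * 1) / c)) x :=
      (((hasDerivAt_id x).const_mul (-c)).exp.div_const c).neg
    convert h using 1
    field_simp
  have htend : Filter.Tendsto (fun t => -(Real.exp (-c * t) / c)) Filter.atTop (nhds 0) := by
    have h2 : Filter.Tendsto (fun t : ℝ => Real.exp (-c * t)) Filter.atTop (nhds 0) := by
      have h3 : Filter.Tendsto (fun t : ℝ => c * t) Filter.atTop Filter.atTop :=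
        Filter.tendsto_id.const_mul_atTop hc
      have h4 := Real.tendsto_exp_neg_atTop_nhds_zero.comp h3
      refine h4.congr fun t => ?_
      simp [Function.comp, neg_mul]
    simpa using (h2.div_const c).neg
  have := integral_Ioi_of_hasDerivAt_of_tendsto' hderiv (exp_neg_integrableOn_Ioi a hc) htend
  rw [this]; ring

theorem stmt10 (ν : Measure ℂ) [IsFiniteMeasure ν] (α l : ℝ)
    (hα : 0 < α) (hα2 : α < 2) (z : ℂ) (hy : 0 < z.im)
    (hν : ∀ t > 0, (ν (Metric.closedBall z t)).toReal ≤
      l * (t / ‖z‖) ^ (2 - α)) :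
    ∫ ζ in Metric.closedBall z (z.im / 2),
        Real.log (3 * z.im / ‖ζ - z‖) ∂ν ≤
      l * (z.im / ‖z‖) ^ (2 - α) *
        (Real.log 6 / 2 ^ (2 - α) + 1 / ((2 - α) * 2 ^ (2 - α))) := by
  set y := z.im with hy_def
  set R := ‖z‖ with hR_def
  have hR : 0 < R := by
    have hz : z ≠ 0 := by
      intro h
      rw [hy_def, h] at hy
      simp at hy
    exact norm_pos_iff.mpr hz
  have hypos : 0 < y := hy
  have hc : 0 < 2 - α := by linarith
  set c := 2 - α with hc_def
  clear_value c
  have hl : 0 ≤ l := by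
    have h1 := hν 1 one_pos
    have h2 : (0:ℝ) < (1 / R) ^ c := Real.rpow_pos_of_pos (by positivity) c
    nlinarith [ENNReal.toReal_nonneg (a := ν (Metric.closedBall z 1))]
  set f : ℂ → ℝ := fun ζ => Real.log (3 * y / ‖ζ - z‖) with hf_def
  have f_mble : Measurable f := by
    have m1 : Measurable fun ζ : ℂ => ‖ζ - z‖ :=
      (continuous_norm.comp (continuous_id.sub continuous_const)).measurable
    exact Real.measurable_log.comp (measurable_const.div m1)
  have f_nn : ∀ ζ ∈ Metric.closedBall z (y / 2), 0 ≤ f ζ := by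
    intro ζ hζ
    rcases eq_or_ne ζ z with rfl | hne
    · simp [hf_def]
    · have habs : 0 < ‖ζ - z‖ := by
        simpa using norm_pos_iff.mpr (sub_ne_zero.mpr hne)
      apply Real.log_nonneg
      rw [le_div_iff₀ habs]
      have hd : ‖ζ - z‖ ≤ y / 2 := by
        simpa [Complex.dist_eq] using Metric.mem_closedBall.mp hζ
      nlinarith
  set μ := ν.restrict (Metric.closedBall z (y / 2)) with hμ_def
  have f_nn' : 0 ≤ᵐ[μ] f :=
    ae_restrict_of_forall_mem measurableSet_closedBall f_nn
  set g : ℝ → ℝ := fun t => l * (min (y / 2) (3 * y * Real.exp (-t)) / R) ^ c with hg_def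
  have g_nn : ∀ t, 0 ≤ g t := fun t =>
    mul_nonneg hl (Real.rpow_nonneg (div_nonneg (le_min (by positivity) (by positivity)) hR.le) c)
  have key : ∀ t ∈ Set.Ioi (0:ℝ), μ {a | t < f a} ≤ ENNReal.ofReal (g t) := by
    intro t ht
    have ht0 : (0:ℝ) < t := ht
    have hr : 0 < min (y / 2) (3 * y * Real.exp (-t)) :=
      lt_min (by positivity) (by positivity)
    have hsub : {a | t < f a} ∩ Metric.closedBall z (y / 2)
        ⊆ Metric.closedBall z (min (y / 2) (3 * y * Real.exp (-t))) := by
      rintro a ⟨ha1, ha2⟩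
      rw [Metric.mem_closedBall, Complex.dist_eq, le_min_iff]
      have hd : ‖a - z‖ ≤ y / 2 := by
        simpa [Complex.dist_eq] using Metric.mem_closedBall.mp ha2
      refine ⟨hd, ?_⟩
      rcases eq_or_lt_of_le (norm_nonneg (a - z)) with h0 | h0
      · rw [← h0]; positivity
      · have hlt : Real.exp t < 3 * y / ‖a - z‖ :=
          (Real.lt_log_iff_exp_lt (by positivity)).mp ha1
        have h1 : Real.exp t * ‖a - z‖ < 3 * y := (lt_div_iff₀ h0).mp hlt
        have h2 : 3 * y * Real.exp (-t) = 3 * y / Real.exp t := by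
          rw [Real.exp_neg]; ring
        rw [h2, le_div_iff₀ (Real.exp_pos t)]
        nlinarith
    have hmeas : MeasurableSet {a | t < f a} := measurableSet_lt measurable_const f_mble
    calc μ {a | t < f a}
        = ν ({a | t < f a} ∩ Metric.closedBall z (y / 2)) := by
          rw [hμ_def, Measure.restrict_apply hmeas]
      _ ≤ ν (Metric.closedBall z (min (y / 2) (3 * y * Real.exp (-t)))) := measure_mono hsub
      _ = ENNReal.ofReal
            ((ν (Metric.closedBall z (min (y / 2) (3 * y * Real.exp (-t))))).toReal) :=
          (ENNReal.ofReal_toReal (measure_ne_top ν _)).symm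
      _ ≤ ENNReal.ofReal (g t) := ENNReal.ofReal_le_ofReal (hν _ hr)
  have hL : (0:ℝ) < Real.log 6 := Real.log_pos (by norm_num)
  have hunion : Set.Ioc (0:ℝ) (Real.log 6) ∪ Set.Ioi (Real.log 6) = Set.Ioi 0 :=
    Set.Ioc_union_Ioi_eq_Ioi hL.le
  have g_cont : Continuous g := by
    apply continuous_const.mul
    apply Continuous.rpow_const
    · exact (continuous_const.min
        (continuous_const.mul (Real.continuous_exp.comp continuous_neg))).div_const R
    · exact fun x => Or.inr hc.le
  have hexp6 : Real.exp (-(Real.log 6)) = 1 / 6 := by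
    rw [Real.exp_neg, Real.exp_log (by norm_num)]; norm_num
  have heq2 : ∀ t ∈ Set.Ioi (Real.log 6),
      g t = (l * (3 * y / R) ^ c) * Real.exp (-c * t) := by
    intro t ht
    have h1 : Real.exp (-t) ≤ 1 / 6 := by
      rw [← hexp6]; exact Real.exp_le_exp.mpr (neg_le_neg (le_of_lt ht))
    have hmin : min (y / 2) (3 * y * Real.exp (-t)) = 3 * y * Real.exp (-t) :=
      min_eq_right (by nlinarith [Real.exp_pos (-t)])
    simp only [hg_def, hmin]
    rw [show 3 * y * Real.exp (-t) / R = (3 * y / R) * Real.exp (-t) by ring,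
      Real.mul_rpow (by positivity) (Real.exp_pos _).le]
    have h3 : Real.exp (-t) ^ c = Real.exp (-c * t) := by
      rw [Real.rpow_def_of_pos (Real.exp_pos _), Real.log_exp]
      congr 1; ring
    rw [h3]; ring
  have int1 : ∫ t in Set.Ioc (0:ℝ) (Real.log 6), g t
      = Real.log 6 * (l * (y / (2 * R)) ^ c) := by
    have heq : ∀ t ∈ Set.Ioc (0:ℝ) (Real.log 6), g t = l * (y / (2 * R)) ^ c := by
      intro t ht
      have h1 : (1:ℝ) / 6 ≤ Real.exp (-t) := by
        rw [← hexp6]; exact Real.exp_le_exp.mpr (neg_le_neg ht.2)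
      have hmin : min (y / 2) (3 * y * Real.exp (-t)) = y / 2 :=
        min_eq_left (by nlinarith)
      simp only [hg_def, hmin]
      congr 1
      ring
    rw [setIntegral_congr_fun measurableSet_Ioc heq, setIntegral_const]
    simp [Real.volume_Ioc, ENNReal.toReal_ofReal hL.le, hL.le]
  have int_g2 : IntegrableOn g (Set.Ioi (Real.log 6)) := by
    have base : IntegrableOn (fun x => (l * (3 * y / R) ^ c) * Real.exp (-c * x))
        (Set.Ioi (Real.log 6)) :=
      (exp_neg_integrableOn_Ioi (Real.log 6) hc).const_mul _
    exact IntegrableOn.congr_fun base (fun t ht => (heq2 t ht).symm) measurableSet_Ioi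
  have int2 : ∫ t in Set.Ioi (Real.log 6), g t
      = l * (3 * y / R) ^ c * ((6:ℝ) ^ (-c) / c) := by
    rw [setIntegral_congr_fun measurableSet_Ioi heq2, integral_const_mul,
      exp_integral_aux hc (Real.log 6)]
    have h6 : Real.exp (-c * Real.log 6) = (6:ℝ) ^ (-c) := by
      rw [Real.rpow_def_of_pos (by norm_num : (0:ℝ) < 6)]
      congr 1; ring
    rw [h6]
  have int_g1 : IntegrableOn g (Set.Ioc 0 (Real.log 6)) := g_cont.integrableOn_Ioc
  have int_g : IntegrableOn g (Set.Ioi 0) := by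
    rw [← hunion]; exact int_g1.union int_g2
  have int_val : ∫ t in Set.Ioi (0:ℝ), g t
      = Real.log 6 * (l * (y / (2 * R)) ^ c) + l * (3 * y / R) ^ c * ((6:ℝ) ^ (-c) / c) := by
    rw [← hunion, setIntegral_union (Set.Ioc_disjoint_Ioi le_rfl) measurableSet_Ioi
      int_g1 int_g2, int1, int2]
  have step2 : ∫⁻ a, ENNReal.ofReal (f a) ∂μ = ∫⁻ t in Set.Ioi 0, μ {a | t < f a} :=
    lintegral_eq_lintegral_meas_lt μ f_nn' f_mble.aemeasurable
  have step3 : ∫⁻ t in Set.Ioi 0, μ {a | t < f a}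
      ≤ ∫⁻ t in Set.Ioi 0, ENNReal.ofReal (g t) :=
    setLIntegral_mono (g_cont.measurable.ennreal_ofReal) key
  have step4 : ∫⁻ t in Set.Ioi 0, ENNReal.ofReal (g t)
      = ENNReal.ofReal (∫ t in Set.Ioi 0, g t) :=
    (ofReal_integral_eq_lintegral_ofReal int_g (Filter.Eventually.of_forall g_nn)).symm
  have final_le : ∫ a, f a ∂μ ≤ ∫ t in Set.Ioi 0, g t := by
    rw [integral_eq_lintegral_of_nonneg_ae f_nn' f_mble.aestronglyMeasurable]
    have hchain : ∫⁻ a, ENNReal.ofReal (f a) ∂μ ≤ ENNReal.ofReal (∫ t in Set.Ioi 0, g t) :=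
      step2.le.trans (le_trans step3 step4.le)
    calc (∫⁻ a, ENNReal.ofReal (f a) ∂μ).toReal
        ≤ (ENNReal.ofReal (∫ t in Set.Ioi 0, g t)).toReal :=
          ENNReal.toReal_mono ENNReal.ofReal_ne_top hchain
      _ = ∫ t in Set.Ioi 0, g t :=
          ENNReal.toReal_ofReal (setIntegral_nonneg measurableSet_Ioi fun t _ => g_nn t)
  have e1 : (y / (2 * R)) ^ c = (y / R) ^ c / 2 ^ c := by
    rw [show y / (2 * R) = (y / R) / 2 by ring,
      Real.div_rpow (by positivity) (by norm_num)]
  have e2 : (3 * y / R) ^ c * (6:ℝ) ^ (-c) = (y / R) ^ c / 2 ^ c := by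
    rw [show 3 * y / R = 3 * (y / R) by ring,
      Real.mul_rpow (by norm_num) (by positivity), Real.rpow_neg (by norm_num),
      show (6:ℝ) = 2 * 3 by norm_num,
      Real.mul_rpow (by norm_num) (by norm_num)]
    have h2 : (2:ℝ) ^ c ≠ 0 := (Real.rpow_pos_of_pos (by norm_num) c).ne'
    have h3 : (3:ℝ) ^ c ≠ 0 := (Real.rpow_pos_of_pos (by norm_num) c).ne'
    field_simp
  calc ∫ ζ in Metric.closedBall z (y / 2), Real.log (3 * y / ‖ζ - z‖) ∂ν
      = ∫ a, f a ∂μ := rfl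
    _ ≤ ∫ t in Set.Ioi 0, g t := final_le
    _ = Real.log 6 * (l * (y / (2 * R)) ^ c)
        + l * (3 * y / R) ^ c * ((6:ℝ) ^ (-c) / c) := int_val
    _ = l * ((y / R) ^ c / 2 ^ c) * Real.log 6
        + l * ((3 * y / R) ^ c * (6:ℝ) ^ (-c)) * (1 / c) := by rw [e1]; ring
    _ = l * ((y / R) ^ c / 2 ^ c) * Real.log 6
        + l * ((y / R) ^ c / 2 ^ c) * (1 / c) := by rw [e2]
    _ = l * (y / R) ^ c * (Real.log 6 / 2 ^ c + 1 / (c * 2 ^ c)) := by ring
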